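/- w-fault boundedness is compositional under parallel composition: if (S₁, wt₁) is w₁-fault-bounded by (S₂, wt₂) and (S₁', wt₁') is w₂-fault-bounded by (S₂', wt₂'), then the product system (S₁ × S₁', with semantics the pair of semantics being ⊥ iff either component is ⊥, and weight the sum of component weights) is min(w₁,w₂)-fault-bounded by the product system (S₂ × S₂'). -/
import Mathlib


/-- An abstract noisy system: a type of faults, a semantics map sending each fault
to `none` (detected) or a semantic value, a weight function, and a distinguished
zero-weight identity (trivial) fault. -/
structure NoisySystem (α : Type*) where
  Fault : Type*
  sem : Fault → Option α
  wt : Fault → ℕ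
  ident : Fault
  wt_ident : wt ident = 0

/-- `A` is `w`-fault-bounded by `B`: every fault of `A` of weight `< w` is either
detected, or matched by a fault of `B` of at most the same weight with the same
(undetected) semantics. -/
def WFaultBounded {α : Type*} (w : ℕ) (A B : NoisySystem α) : Prop :=
  ∀ F₁ : A.Fault, A.wt F₁ < w →
    A.sem F₁ = none ∨
      ∃ F₂ : B.Fault, B.wt F₂ ≤ A.wt F₁ ∧ B.sem F₂ = A.sem F₁ ∧ A.sem F₁ ≠ none

/-- `A` is fault-bounded by `B`: `A` is `w`-fault-bounded by `B` for every `w`. -/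
def FaultBounded {α : Type*} (A B : NoisySystem α) : Prop :=
  ∀ w : ℕ, WFaultBounded w A B

/-- Parallel composition of noisy systems: faults are pairs, the semantics is the
pair of components (detected iff either component is detected), and weights add. -/
def NoisySystem.prod {α β : Type*} (A : NoisySystem α) (B : NoisySystem β) :
    NoisySystem (α × β) where
  Fault := A.Fault × B.Fault
  sem := fun F => Option.map₂ Prod.mk (A.sem F.1) (B.sem F.2)
  wt := fun F => A.wt F.1 + B.wt F.2
  ident := (A.ident, B.ident)
  wt_ident := by simp only []; rw [A.wt_ident, B.wt_ident]

/-- `w`-fault boundedness is compositional under parallel composition. -/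
theorem wFaultBounded_prod {α β : Type*} (w₁ w₂ : ℕ)
    (A₁ A₂ : NoisySystem α) (B₁ B₂ : NoisySystem β)
    (hA : WFaultBounded w₁ A₁ A₂) (hB : WFaultBounded w₂ B₁ B₂) :
    WFaultBounded (min w₁ w₂) (A₁.prod B₁) (A₂.prod B₂) := by
  rintro ⟨f, g⟩ hw
  simp only [NoisySystem.prod, lt_min_iff] at hw ⊢
  obtain ⟨h1, h2⟩ := hw
  have hf : A₁.wt f < w₁ := lt_of_le_of_lt (Nat.le_add_right _ _) h1
  have hg : B₁.wt g < w₂ := lt_of_le_of_lt (Nat.le_add_left _ _) h2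
  rcases hA f hf with hfn | ⟨f₂, hf₂w, hf₂s, hfne⟩
  · left; simp [hfn]
  rcases hB g hg with hgn | ⟨g₂, hg₂w, hg₂s, hgne⟩
  · left; simp [hgn]
  right
  refine ⟨(f₂, g₂), Nat.add_le_add hf₂w hg₂w, by rw [hf₂s, hg₂s], ?_⟩
  obtain ⟨a, ha⟩ := Option.ne_none_iff_exists'.mp hfne
  obtain ⟨b, hb⟩ := Option.ne_none_iff_exists'.mp hgne
  simp [ha, hb]
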